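/- Let λ ≥ 2 be an integer and let p be a source with 2^{−λ} ≤ p(1) < 2/(2^λ + 1). Then R*_opt(p) < 1 + lg((1 − p(1))/(1 − 2^{−λ})). -/

import Mathlib

/-- A source: a positive, monotonically nonincreasing probability mass function on `Fin n`. -/
def IsSource (n : ℕ) (p : Fin n → ℝ) : Prop :=
  (∀ i, 0 < p i) ∧ (∑ i, p i = 1) ∧ (∀ i j : Fin n, i ≤ j → p j ≤ p i)

/-- A codeword-length vector: positive integer lengths satisfying the Kraft inequality. -/
def IsCLV (n : ℕ) (l : Fin n → ℤ) : Prop :=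
  (∀ i, 1 ≤ l i) ∧ (∑ i, (2:ℝ) ^ (-(l i)) ≤ 1)

/-- Maximum pointwise redundancy `R*(l,p) = max_i (l(i) + lg p(i))`. -/
noncomputable def Rstar (n : ℕ) (l : Fin n → ℤ) (p : Fin n → ℝ) : ℝ :=
  ⨆ i : Fin n, ((l i : ℝ) + Real.logb 2 (p i))

/-- Minimum maximum pointwise redundancy over all codeword-length vectors. -/
noncomputable def RstarOpt (n : ℕ) (p : Fin n → ℝ) : ℝ :=
  sInf {r : ℝ | ∃ l : Fin n → ℤ, IsCLV n l ∧ Rstar n l p = r}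

theorem stmt6 (n : ℕ) (hn : 2 ≤ n) (lam : ℕ) (hlam : 2 ≤ lam)
    (p : Fin n → ℝ) (hp : IsSource n p)
    (h1 : (2:ℝ) ^ (-(lam:ℤ)) ≤ p ⟨0, by omega⟩)
    (h2 : p ⟨0, by omega⟩ < 2 / ((2:ℝ) ^ lam + 1)) :
    RstarOpt n p < 1 + Real.logb 2 ((1 - p ⟨0, by omega⟩) / (1 - (2:ℝ) ^ (-(lam:ℤ)))) := by
  obtain ⟨hpos, hsum, hmono⟩ := hp
  have hn0 : 0 < n := by omega
  set i0 : Fin n := ⟨0, by omega⟩ with hi0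
  set p1 : ℝ := p i0 with hp1def
  set a : ℝ := (2:ℝ) ^ (-(lam:ℤ)) with hadef
  have ha_inv : a = ((2:ℝ) ^ lam)⁻¹ := by
    rw [hadef, zpow_neg, zpow_natCast]
  have h2pow4 : (4:ℝ) ≤ 2 ^ lam := by
    calc (4:ℝ) = 2 ^ 2 := by norm_num
    _ ≤ 2 ^ lam := pow_le_pow_right₀ (by norm_num) hlam
  have h2powpos : (0:ℝ) < 2 ^ lam := by positivity
  have ha_pos : 0 < a := by rw [ha_inv]; positivity
  have ha_lt1 : a < 1 := by
    rw [ha_inv]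
    rw [inv_lt_one_iff₀]
    right; linarith
  have hp1pos : 0 < p1 := hpos i0
  have hp1lt1 : p1 < 1 := by
    have : (2:ℝ) / ((2:ℝ) ^ lam + 1) < 1 := by
      rw [div_lt_one (by linarith)]; linarith
    linarith [h2]
  have h1mp1 : 0 < 1 - p1 := by linarith
  have h1ma : 0 < 1 - a := by linarith
  set c : ℝ := (1 - a) / (1 - p1) with hcdef
  have hc_pos : 0 < c := by positivity
  -- the codeword-length vector
  classical
  set l : Fin n → ℤ := fun i => if i = i0 then (lam : ℤ) else ⌈-Real.logb 2 (c * p i)⌉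
    with hldef
  have hli0 : l i0 = (lam : ℤ) := by simp [hldef]
  -- facts for i ≠ i0
  have hple : ∀ i : Fin n, i ≠ i0 → p i ≤ 1 - p1 := by
    intro i hi
    have hmem : i ∈ Finset.univ.erase i0 := Finset.mem_erase.mpr ⟨hi, Finset.mem_univ i⟩
    have hsle : p i ≤ ∑ j ∈ Finset.univ.erase i0, p j :=
      Finset.single_le_sum (fun j _ => (hpos j).le) hmem
    have hseq : p i0 + ∑ j ∈ Finset.univ.erase i0, p j = ∑ j, p j :=
      Finset.add_sum_erase _ p (Finset.mem_univ i0)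
    rw [hsum] at hseq
    linarith
  have hcpi_pos : ∀ i : Fin n, 0 < c * p i := fun i => mul_pos hc_pos (hpos i)
  have hcpi_lt1 : ∀ i : Fin n, i ≠ i0 → c * p i < 1 := by
    intro i hi
    have h1 : c * p i ≤ c * (1 - p1) := by
      apply mul_le_mul_of_nonneg_left (hple i hi) hc_pos.le
    have h2 : c * (1 - p1) = 1 - a := by
      rw [hcdef]; field_simp
    linarith
  have hlpos : ∀ i : Fin n, 1 ≤ l i := by
    intro i
    by_cases hi : i = i0
    · rw [hi, hli0]; exact_mod_cast by omega
    · rw [hldef]; simp only [if_neg hi]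
      have hneg : Real.logb 2 (c * p i) < 0 :=
        Real.logb_neg (by norm_num) (hcpi_pos i) (hcpi_lt1 i hi)
      have := Int.ceil_pos.mpr (show (0:ℝ) < -Real.logb 2 (c * p i) by linarith)
      omega
  -- Kraft term bound for i ≠ i0
  have hkraft_term : ∀ i : Fin n, i ≠ i0 → (2:ℝ) ^ (-(l i)) ≤ c * p i := by
    intro i hi
    have hle : (-(l i) : ℝ) ≤ Real.logb 2 (c * p i) := by
      have := Int.le_ceil (-Real.logb 2 (c * p i))
      rw [hldef]; simp only [if_neg hi]
      push_cast
      linarith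
    calc (2:ℝ) ^ (-(l i)) = (2:ℝ) ^ ((-(l i) : ℤ) : ℝ) := (Real.rpow_intCast 2 _).symm
    _ ≤ (2:ℝ) ^ (Real.logb 2 (c * p i)) := by
        apply Real.rpow_le_rpow_of_exponent_le (by norm_num)
        exact_mod_cast hle
    _ = c * p i := Real.rpow_logb (by norm_num) (by norm_num) (hcpi_pos i)
  -- Kraft inequality
  have hkraft : ∑ i, (2:ℝ) ^ (-(l i)) ≤ 1 := by
    have hsplit := Finset.add_sum_erase Finset.univ
      (fun i => (2:ℝ) ^ (-(l i))) (Finset.mem_univ i0)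
    have hsum2 : ∑ i ∈ Finset.univ.erase i0, (2:ℝ) ^ (-(l i))
        ≤ ∑ i ∈ Finset.univ.erase i0, c * p i := by
      apply Finset.sum_le_sum
      intro i hi
      exact hkraft_term i (Finset.mem_erase.mp hi).1
    have hsum3 : ∑ i ∈ Finset.univ.erase i0, c * p i = c * (1 - p1) := by
      rw [← Finset.mul_sum]
      have hseq : p i0 + ∑ j ∈ Finset.univ.erase i0, p j = ∑ j, p j :=
        Finset.add_sum_erase _ p (Finset.mem_univ i0)
      rw [hsum] at hseq
      have : ∑ j ∈ Finset.univ.erase i0, p j = 1 - p1 := by linarith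
      rw [this]
    have hcval : c * (1 - p1) = 1 - a := by rw [hcdef]; field_simp
    have hterm0 : (2:ℝ) ^ (-(l i0)) = a := by rw [hli0, hadef]
    linarith
  have hclv : IsCLV n l := ⟨hlpos, hkraft⟩
  -- the bound B
  set B : ℝ := 1 + Real.logb 2 ((1 - p1) / (1 - a)) with hBdef
  have hlogbc : Real.logb 2 ((1 - p1) / (1 - a)) = -Real.logb 2 c := by
    rw [hcdef, Real.logb_div (by linarith) (by linarith),
      Real.logb_div (by linarith) (by linarith)]
    ring
  -- pointwise bound
  have hpt : ∀ i : Fin n, (l i : ℝ) + Real.logb 2 (p i) < B := by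
    intro i
    by_cases hi : i = i0
    · rw [hi, hli0]
      -- λ + logb p1 < B  ⟺  2^λ p1 < 2 (1-p1)/(1-a)
      have key : (2:ℝ) ^ lam * p1 < 2 * ((1 - p1) / (1 - a)) := by
        have hrw : (2:ℝ) * ((1 - p1) / (1 - a)) = (2 * (1 - p1)) / (1 - a) := by ring
        rw [hrw, lt_div_iff₀ h1ma]
        have hp1b : p1 * ((2:ℝ) ^ lam + 1) < 2 := by
          rw [lt_div_iff₀ (by linarith)] at h2
          exact h2
        have hainv : (2:ℝ) ^ lam * a = 1 := by
          rw [ha_inv]; field_simp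
        nlinarith [hp1b, hainv]
      have hlog := Real.logb_lt_logb (b := 2) (by norm_num)
        (by positivity : (0:ℝ) < (2:ℝ) ^ lam * p1) key
      rw [Real.logb_mul (by positivity) hp1pos.ne',
        Real.logb_mul (by norm_num) (by positivity)] at hlog
      have hl2 : Real.logb 2 ((2:ℝ) ^ lam) = lam := by
        rw [Real.logb_pow, Real.logb_self_eq_one (by norm_num : (1:ℝ) < 2), mul_one]
      have hl1 : Real.logb 2 (2:ℝ) = 1 := Real.logb_self_eq_one (by norm_num : (1:ℝ) < 2)
      rw [hBdef]
      push_cast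
      rw [hl2, hl1] at hlog
      linarith
    · have hceil : (l i : ℝ) < -Real.logb 2 (c * p i) + 1 := by
        rw [hldef]; simp only [if_neg hi]
        exact_mod_cast Int.ceil_lt_add_one _
      have hlm : Real.logb 2 (c * p i) = Real.logb 2 c + Real.logb 2 (p i) :=
        Real.logb_mul hc_pos.ne' (hpos i).ne'
      rw [hBdef, hlogbc]
      linarith [hceil, hlm]
  -- Rstar < B
  have hRstar : Rstar n l p < B := by
    have : Nonempty (Fin n) := ⟨i0⟩
    obtain ⟨imax, himax⟩ := Finite.exists_max (fun i : Fin n => (l i : ℝ) + Real.logb 2 (p i))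
    have hle : Rstar n l p ≤ (l imax : ℝ) + Real.logb 2 (p imax) :=
      ciSup_le himax
    exact lt_of_le_of_lt hle (hpt imax)
  -- bddBelow of the clv set
  have hbdd : BddBelow {r : ℝ | ∃ l : Fin n → ℤ, IsCLV n l ∧ Rstar n l p = r} := by
    refine ⟨1 + Real.logb 2 p1, ?_⟩
    rintro r ⟨l', ⟨hl'pos, _⟩, rfl⟩
    have hba : BddAbove (Set.range fun i : Fin n => (l' i : ℝ) + Real.logb 2 (p i)) :=
      Set.Finite.bddAbove (Set.finite_range _)
    have h0 : (l' i0 : ℝ) + Real.logb 2 (p i0) ≤ Rstar n l' p := le_ciSup hba i0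
    have h1 : (1:ℝ) ≤ (l' i0 : ℝ) := by exact_mod_cast hl'pos i0
    calc (1:ℝ) + Real.logb 2 p1 ≤ (l' i0 : ℝ) + Real.logb 2 (p i0) := by
          rw [hp1def]; linarith
    _ ≤ Rstar n l' p := h0
  have hmem : Rstar n l p ∈ {r : ℝ | ∃ l : Fin n → ℤ, IsCLV n l ∧ Rstar n l p = r} :=
    ⟨l, hclv, rfl⟩
  have hopt : RstarOpt n p ≤ Rstar n l p := csInf_le hbdd hmem
  calc RstarOpt n p ≤ Rstar n l p := hopt
  _ < B := hRstar
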